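/- If G is a finite connected graph other than K_1, K_2, or P_3, then χ_g^∞(G) > 3; that is, Bob wins the eternal vertex coloring game on G when only 3 colors are available. -/

import Mathlib

open SimpleGraph

/-- A state of the eternal vertex coloring game: the current (partial) coloring,
the set of vertices already chosen in the current round, and whose turn it is. -/
structure EGState (V : Type) (k : ℕ) where
  col : V → Option (Fin k)
  played : Finset V
  aliceTurn : Bool

variable {V : Type} [Fintype V] [DecidableEq V]

/-- A move (vertex `v`, color `c`) is legal: `v` has not yet been chosen this round,
`c` differs from the current color of `v`, and `c` does not appear on a neighbor. -/
def EGLegal (G : SimpleGraph V) {k : ℕ} (s : EGState V k) (v : V) (c : Fin k) : Prop :=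
  v ∉ s.played ∧ s.col v ≠ some c ∧ ∀ u, G.Adj v u → s.col u ≠ some c

/-- The state after (re-)coloring `v` with `c`; the round resets when every vertex
has been chosen once. -/
def EGStep {k : ℕ} (s : EGState V k) (v : V) (c : Fin k) : EGState V k where
  col := Function.update s.col v (some c)
  played := if insert v s.played = Finset.univ then ∅ else insert v s.played
  aliceTurn := !s.aliceTurn

/-- Alice can survive `n` further moves: on her turn she has some legal move after
which she survives; on Bob's turn every vertex he might choose admits a legal color
(otherwise Bob wins by choosing a stuck vertex) and she survives every legal move of his. -/
def EGSurvives (G : SimpleGraph V) {k : ℕ} : ℕ → EGState V k → Prop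
  | 0, _ => True
  | n + 1, s =>
      if s.aliceTurn then
        ∃ v c, EGLegal G s v c ∧ EGSurvives G n (EGStep s v c)
      else
        (∀ v, v ∉ s.played → ∃ c, EGLegal G s v c) ∧
          ∀ v c, EGLegal G s v c → EGSurvives G n (EGStep s v c)

/-- The initial state: all vertices uncolored, Alice to move. -/
def EGInit (V : Type) (k : ℕ) : EGState V k := ⟨fun _ => none, ∅, true⟩

/-- Alice wins the eternal vertex coloring game on `G` with `k` colors
(the game is finitely branching, so winning is equivalent to surviving forever). -/
def AliceWinsEG (G : SimpleGraph V) (k : ℕ) : Prop :=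
  ∀ n, EGSurvives G n (EGInit V k)

/-- The eternal game chromatic number `χ_g^∞(G)`. -/
noncomputable def eternalGameChromatic (G : SimpleGraph V) : ℕ :=
  sInf {k | AliceWinsEG G k}

/-! ### Preliminaries -/

lemma fin3_third_unique : ∀ (a b u v : Fin 3), a ≠ b → u ≠ a → u ≠ b → v ≠ a → v ≠ b → u = v := by
  decide

lemma fin3_cover : ∀ (a b c x : Fin 3), a ≠ b → a ≠ c → b ≠ c → x = a ∨ x = b ∨ x = c := by
  decide

lemma fin3_exists_ne : ∀ (a b : Fin 3), ∃ c : Fin 3, c ≠ a ∧ c ≠ b := by decide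

lemma fin2_three_distinct : ∀ (a b c : Fin 2), a ≠ b → c ≠ a → c ≠ b → False := by decide

section Game

variable {G : SimpleGraph V} {k : ℕ}

lemma surv_alice {s : EGState V k} (h : s.aliceTurn = true) (m : ℕ) :
    EGSurvives G (m + 1) s ↔ ∃ v c, EGLegal G s v c ∧ EGSurvives G m (EGStep s v c) := by
  simp [EGSurvives, h]

lemma surv_bob {s : EGState V k} (h : s.aliceTurn = false) (m : ℕ) :
    EGSurvives G (m + 1) s ↔
      (∀ v, v ∉ s.played → ∃ c, EGLegal G s v c) ∧
        ∀ v c, EGLegal G s v c → EGSurvives G m (EGStep s v c) := by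
  simp [EGSurvives, h]

lemma surv_pred : ∀ (m : ℕ) (s : EGState V k), EGSurvives G (m + 1) s → EGSurvives G m s := by
  intro m
  induction m with
  | zero => intro s _; trivial
  | succ i ih =>
    intro s hs
    by_cases h : s.aliceTurn = true
    · rw [surv_alice h] at hs ⊢
      obtain ⟨v, c, hleg, hsurv⟩ := hs
      exact ⟨v, c, hleg, ih _ hsurv⟩
    · rw [Bool.not_eq_true] at h
      rw [surv_bob h] at hs ⊢
      exact ⟨hs.1, fun v c hleg => ih _ (hs.2 v c hleg)⟩

lemma surv_le {m m' : ℕ} (h : m ≤ m') {s : EGState V k} :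
    EGSurvives G m' s → EGSurvives G m s := by
  obtain ⟨d, rfl⟩ := Nat.exists_eq_add_of_le h
  clear h
  induction d with
  | zero => exact id
  | succ i ih => exact fun hs => ih (surv_pred _ _ (by rwa [← Nat.add_assoc] at hs))

/-- Partial proper coloring. -/
def PrOpt (G : SimpleGraph V) {k : ℕ} (col : V → Option (Fin k)) : Prop :=
  ∀ a b, G.Adj a b → ∀ c : Fin k, col a = some c → col b ≠ some c

lemma prOpt_step {col : V → Option (Fin k)} (hpr : PrOpt G col) {v : V} {c : Fin k}
    (hleg : ∀ u, G.Adj v u → col u ≠ some c) :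
    PrOpt G (Function.update col v (some c)) := by
  intro a b hab d ha hb
  rcases eq_or_ne a v with rfl | hav
  · rw [Function.update_self] at ha
    rw [Function.update_of_ne hab.ne' ] at hb
    obtain rfl : c = d := by injection ha
    exact hleg b hab hb
  · rw [Function.update_of_ne hav] at ha
    rcases eq_or_ne b v with rfl | hbv
    · rw [Function.update_self] at hb
      obtain rfl : c = d := by injection hb
      exact hleg a hab.symm ha
    · rw [Function.update_of_ne hbv] at hb
      exact hpr a b hab d ha hb

lemma step_played_ne_univ [Nonempty V] (s : EGState V k) (v : V) (c : Fin k) :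
    (EGStep s v c).played ≠ Finset.univ := by
  show (if insert v s.played = Finset.univ then ∅ else insert v s.played) ≠ Finset.univ
  split
  · exact fun h => (Finset.univ_nonempty (α := V)).ne_empty h.symm
  · assumption

/-- The generic "Bob plays arbitrarily until the round resets" lemma. -/
lemma run [Nonempty V] (P : EGState V k → Prop) (K : ℕ)
    (hne : ∀ s, P s → s.played ≠ Finset.univ)
    (hstep : ∀ s v c, P s → EGLegal G s v c → insert v s.played ≠ Finset.univ →
      P (EGStep s v c))
    (hreset : ∀ s v c, P s → EGLegal G s v c → insert v s.played = Finset.univ →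
      ¬ EGSurvives G K (EGStep s v c)) :
    ∀ (j : ℕ) (s : EGState V k), P s → Fintype.card V ≤ s.played.card + j →
      ¬ EGSurvives G (j + K) s := by
  intro j
  induction j with
  | zero =>
    intro s hP hcard _
    refine hne s hP ?_
    exact Finset.eq_univ_of_card _ (le_antisymm (Finset.card_le_univ _) (by simpa using hcard))
  | succ i ih =>
    intro s hP hcard hs
    rw [show i + 1 + K = (i + K) + 1 by omega] at hs
    by_cases ha : s.aliceTurn = true
    · rw [surv_alice ha] at hs
      obtain ⟨v, c, hleg, hsurv⟩ := hs
      by_cases hres : insert v s.played = Finset.univ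
      · exact hreset s v c hP hleg hres (surv_le (by omega) hsurv)
      · refine ih (EGStep s v c) (hstep s v c hP hleg hres) ?_ hsurv
        have : (EGStep s v c).played = insert v s.played := if_neg hres
        rw [this, Finset.card_insert_of_notMem hleg.1]
        omega
    · rw [Bool.not_eq_true] at ha
      rw [surv_bob ha] at hs
      obtain ⟨hcheck, hall⟩ := hs
      have hvex : ∃ v, v ∉ s.played := by
        by_contra hno
        push_neg at hno
        exact hne s hP (Finset.eq_univ_iff_forall.2 hno)
      obtain ⟨v, hv⟩ := hvex
      obtain ⟨c, hleg⟩ := hcheck v hv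
      by_cases hres : insert v s.played = Finset.univ
      · exact hreset s v c hP hleg hres (surv_le (by omega) (hall v c hleg))
      · refine ih (EGStep s v c) (hstep s v c hP hleg hres) ?_ (hall v c hleg)
        have : (EGStep s v c).played = insert v s.played := if_neg hres
        rw [this, Finset.card_insert_of_notMem hleg.1]
        omega

end Game

set_option linter.unusedSectionVars false

section GraphFacts

variable {G : SimpleGraph V}

lemma exists_adj (hconn : G.Connected) (h2 : 2 ≤ Fintype.card V) (v : V) :
    ∃ u, G.Adj v u := by
  obtain ⟨w, hw⟩ := Fintype.exists_ne_of_one_lt_card (by omega) v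
  obtain ⟨p⟩ := hconn.preconnected v w
  cases p with
  | nil => exact absurd rfl hw
  | cons h _ => exact ⟨_, h⟩

lemma star_or_ns (hconn : G.Connected) :
    (∀ t : V, ∃ u w, G.Adj t u ∧ G.Adj u w ∧ w ≠ t) ∨
      ∃ z : V, ∀ v, v ≠ z → G.Adj z v ∧ ∀ w, G.Adj v w → w = z := by
  by_cases h : ∀ t : V, ∃ u w, G.Adj t u ∧ G.Adj u w ∧ w ≠ t
  · exact Or.inl h
  right
  push_neg at h
  obtain ⟨t, ht⟩ := h
  have key : ∀ (a b : V) (_ : G.Walk a b), (a = t ∨ G.Adj t a) → (b = t ∨ G.Adj t b) := by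
    intro a b p
    induction p with
    | nil => exact id
    | @cons u v w h' p' ih =>
      intro hu
      apply ih
      rcases hu with rfl | hu
      · exact Or.inr h'
      · exact Or.inl (ht u v hu h')
  refine ⟨t, fun v hv => ?_⟩
  obtain ⟨p⟩ := hconn.preconnected t v
  have hadj : G.Adj t v := by
    rcases key t v p (Or.inl rfl) with rfl | hadj
    · exact absurd rfl hv
    · exact hadj
  exact ⟨hadj, fun w hw => ht v w hadj hw⟩

lemma card_ge_three (hconn : G.Connected)
    (h1 : ¬ Nonempty (G ≃g (⊤ : SimpleGraph (Fin 1))))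
    (h2 : ¬ Nonempty (G ≃g (⊤ : SimpleGraph (Fin 2)))) :
    3 ≤ Fintype.card V := by
  have hne : Nonempty V := hconn.nonempty
  have hpos : 1 ≤ Fintype.card V := Fintype.card_pos
  by_contra hlt
  push_neg at hlt
  interval_cases hcard : Fintype.card V
  · -- card = 1
    refine h1 ⟨⟨Fintype.equivFinOfCardEq hcard, ?_⟩⟩
    intro a b
    have hab : a = b := by
      have : Fintype.card V ≤ 1 := by omega
      exact Fintype.card_le_one_iff.1 this a b
    subst hab
    simp
  · -- card = 2
    have hadj : ∀ a b : V, a ≠ b → G.Adj a b := by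
      intro a b hab
      have huniv : ({a, b} : Finset V) = Finset.univ := by
        apply Finset.eq_univ_of_card
        rw [Finset.card_insert_of_notMem (by simpa using hab), Finset.card_singleton, hcard]
      have hmem : ∀ y : V, y = a ∨ y = b := by
        intro y
        have : y ∈ ({a, b} : Finset V) := huniv ▸ Finset.mem_univ y
        simpa using this
      obtain ⟨p⟩ := hconn.preconnected a b
      cases p with
      | nil => exact absurd rfl hab
      | @cons u x w h p' =>
        rcases hmem x with rfl | rfl
        · exact absurd rfl h.ne
        · exact h
    refine h2 ⟨⟨Fintype.equivFinOfCardEq hcard, ?_⟩⟩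
    intro a b
    constructor
    · intro h
      simp only [top_adj] at h
      exact hadj a b fun hab => h (by rw [hab])
    · intro h
      simp only [top_adj]
      exact fun he => h.ne ((Fintype.equivFinOfCardEq hcard).injective he)

lemma star_card_ne_three (hconn : G.Connected)
    (h3 : ¬ Nonempty (G ≃g pathGraph 3)) {z : V}
    (hstar : ∀ v, v ≠ z → G.Adj z v ∧ ∀ w, G.Adj v w → w = z) :
    Fintype.card V ≠ 3 := by
  intro hcard
  have herase : (Finset.univ.erase z).card = 2 := by
    rw [Finset.card_erase_of_mem (Finset.mem_univ z), Finset.card_univ, hcard]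
  obtain ⟨l1, l2, hne12, heq⟩ := Finset.card_eq_two.1 herase
  have hl1 : l1 ≠ z := by
    have : l1 ∈ Finset.univ.erase z := heq ▸ Finset.mem_insert_self _ _
    exact Finset.ne_of_mem_erase this
  have hl2 : l2 ≠ z := by
    have : l2 ∈ Finset.univ.erase z := heq ▸ Finset.mem_insert_of_mem (Finset.mem_singleton_self _)
    exact Finset.ne_of_mem_erase this
  have hmem : ∀ y : V, y = z ∨ y = l1 ∨ y = l2 := by
    intro y
    rcases eq_or_ne y z with rfl | hy
    · exact Or.inl rfl
    · have : y ∈ Finset.univ.erase z := Finset.mem_erase.2 ⟨hy, Finset.mem_univ y⟩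
      rw [heq] at this
      simpa using Or.inr this
  have hadj1 : G.Adj z l1 := (hstar l1 hl1).1
  have hadj2 : G.Adj z l2 := (hstar l2 hl2).1
  have hnadj : ¬ G.Adj l1 l2 := fun h => hl2 ((hstar l1 hl1).2 l2 h)
  -- build the equivalence
  let f : V → Fin 3 := fun v => if v = z then 1 else if v = l1 then 0 else 2
  let g : Fin 3 → V := fun i => if i = 0 then l1 else if i = 1 then z else l2
  have hfz : f z = 1 := by simp [f]
  have hfl1 : f l1 = 0 := by simp [f, hl1]
  have hfl2 : f l2 = 2 := by simp [f, hl2, hne12.symm]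
  have hg0 : g 0 = l1 := by simp [g]
  have hg1 : g 1 = z := by simp [g]
  have hg2 : g 2 = l2 := by simp [g]
  refine h3 ⟨⟨⟨f, g, ?_, ?_⟩, ?_⟩⟩
  · intro v
    rcases hmem v with rfl | rfl | rfl
    · rw [hfz, hg1]
    · rw [hfl1, hg0]
    · rw [hfl2, hg2]
  · intro i
    fin_cases i
    · show f (g 0) = 0
      rw [hg0, hfl1]
    · show f (g 1) = 1
      rw [hg1, hfz]
    · show f (g 2) = 2
      rw [hg2, hfl2]
  · intro a b
    show (pathGraph 3).Adj (f a) (f b) ↔ G.Adj a b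
    rcases hmem a with rfl | rfl | rfl <;> rcases hmem b with rfl | rfl | rfl <;>
      rw [pathGraph_adj] <;> simp only [hfz, hfl1, hfl2]
    · exact iff_of_false (by decide) G.irrefl
    · exact iff_of_true (by decide) hadj1
    · exact iff_of_true (by decide) hadj2
    · exact iff_of_true (by decide) hadj1.symm
    · exact iff_of_false (by decide) G.irrefl
    · exact iff_of_false (by decide) hnadj
    · exact iff_of_true (by decide) hadj2.symm
    · exact iff_of_false (by decide) (fun h => hnadj h.symm)
    · exact iff_of_false (by decide) G.irrefl

end GraphFacts

section Kill

variable {G : SimpleGraph V}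

lemma EGStep_col {k : ℕ} (s : EGState V k) (v : V) (c : Fin k) :
    (EGStep s v c).col = Function.update s.col v (some c) := rfl

lemma EGStep_turn {k : ℕ} (s : EGState V k) (v : V) (c : Fin k) :
    (EGStep s v c).aliceTurn = !s.aliceTurn := rfl

lemma EGStep_played_of_ne {k : ℕ} (s : EGState V k) (v : V) (c : Fin k)
    (h : insert v s.played ≠ Finset.univ) : (EGStep s v c).played = insert v s.played :=
  if_neg h

lemma ne_univ_of_not_mem {a : V} {s : Finset V} (h : a ∉ s) : s ≠ Finset.univ := by
  intro he; exact h (he ▸ Finset.mem_univ a)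

lemma hall_step {k : ℕ} {col : V → Option (Fin k)} (hall : ∀ v, (col v).isSome) (v : V)
    (c : Fin k) : ∀ w, ((Function.update col v (some c)) w).isSome := by
  intro w
  rcases eq_or_ne w v with rfl | hw
  · rw [Function.update_self]; rfl
  · rw [Function.update_of_ne hw]; exact hall w

/-- At a Bob check, neighbors of an unplayed colored vertex with a legal color all
agree in color. -/
lemma mono_nbhd {col : V → Option (Fin 3)} (hpr : PrOpt G col) {x u u' : V}
    {dx du du' cx : Fin 3} (hx : col x = some dx) (hcx : col x ≠ some cx)
    (hnb : ∀ w, G.Adj x w → col w ≠ some cx) (hxu : G.Adj x u) (hxu' : G.Adj x u')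
    (hu : col u = some du) (hu' : col u' = some du') : du = du' := by
  have hdxcx : dx ≠ cx := fun h => hcx (h ▸ hx)
  have h1 : du ≠ dx := fun h => hpr x u hxu dx hx (h ▸ hu)
  have h2 : du ≠ cx := fun h => hnb u hxu (h ▸ hu)
  have h3 : du' ≠ dx := fun h => hpr x u' hxu' dx hx (h ▸ hu')
  have h4 : du' ≠ cx := fun h => hnb u' hxu' (h ▸ hu')
  exact fin3_third_unique dx cx du du' hdxcx h1 h2 h3 h4

lemma some_ne {a b : Fin 3} (h : a ≠ b) : (some a : Option (Fin 3)) ≠ some b := by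
  simpa using h

/-- The 4-ply kill at a reset state with Alice to move, for non-star graphs. -/
lemma kill_nonstar (hcard : 3 ≤ Fintype.card V)
    (hns : ∀ t : V, ∃ u w, G.Adj t u ∧ G.Adj u w ∧ w ≠ t)
    (s : EGState V 3) (hturn : s.aliceTurn = true) (hplayed : s.played = ∅)
    (hall : ∀ v, (s.col v).isSome) (hpr : PrOpt G s.col) :
    ¬ EGSurvives G 4 s := by
  intro hS0
  replace hS0 : EGSurvives G (3 + 1) s := hS0
  rw [surv_alice hturn] at hS0
  obtain ⟨t, cstar, hleg, hS3⟩ := hS0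
  obtain ⟨u, v', htu, huv, hvt⟩ := hns t
  have hut : u ≠ t := htu.ne'
  have hvu : v' ≠ u := huv.ne'
  -- the state s1 after Alice's move
  set s1 := EGStep s t cstar with hs1
  have hp1 : s1.played = {t} := by
    rw [hs1, EGStep_played_of_ne]
    · simp [hplayed]
    · rw [hplayed]
      exact ne_univ_of_not_mem (by simpa using hut)
  have hc1 : s1.col = Function.update s.col t (some cstar) := rfl
  have ht1 : s1.aliceTurn = false := by rw [hs1, EGStep_turn, hturn]; rfl
  have hall1 : ∀ v, (s1.col v).isSome := by rw [hc1]; exact hall_step hall _ _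
  have hpr1 : PrOpt G s1.col := by rw [hc1]; exact prOpt_step hpr hleg.2.2
  have hcolt : s1.col t = some cstar := by rw [hc1]; exact Function.update_self _ _ _
  replace hS3 : EGSurvives G (2 + 1) s1 := hS3
  rw [surv_bob ht1] at hS3
  obtain ⟨hcheck1, hmoves1⟩ := hS3
  -- colors of u and v'
  obtain ⟨du, hdu⟩ := Option.isSome_iff_exists.1 (hall1 u)
  obtain ⟨dv, hdv⟩ := Option.isSome_iff_exists.1 (hall1 v')
  -- u is unplayed in s1, so has a legal color cu
  obtain ⟨cu, hcu⟩ := hcheck1 u (by rw [hp1]; simpa using hut)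
  -- all neighbors of u share the color cstar
  have hdvcstar : dv = cstar :=
    mono_nbhd hpr1 hdu hcu.2.1 hcu.2.2 huv htu.symm hdv hcolt
  -- key distinctness facts
  have hducstar : du ≠ cstar := fun h => hpr1 u t htu.symm du hdu (h ▸ hcolt)
  have hducu : du ≠ cu := fun h => hcu.2.1 (h ▸ hdu)
  have hcstarcu : cstar ≠ cu := fun h => hcu.2.2 t htu.symm (h ▸ hcolt)
  -- Bob recolors v' with cu
  have hlegB : EGLegal G s1 v' cu := by
    refine ⟨by rw [hp1]; simpa using hvt, ?_, ?_⟩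
    · rw [hdv, hdvcstar]; exact some_ne hcstarcu
    · intro w hw
      obtain ⟨dw, hdw⟩ := Option.isSome_iff_exists.1 (hall1 w)
      obtain ⟨cv, hcv⟩ := hcheck1 v' (by rw [hp1]; simpa using hvt)
      have : dw = du := mono_nbhd hpr1 hdv hcv.2.1 hcv.2.2 hw huv.symm hdw hdu
      rw [hdw, this]; exact some_ne hducu
  have hS2 := hmoves1 v' cu hlegB
  set s2 := EGStep s1 v' cu with hs2
  have hp2 : s2.played = insert v' {t} := by
    rw [hs2, EGStep_played_of_ne]
    · rw [hp1]
    · rw [hp1]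
      refine ne_univ_of_not_mem (a := u) ?_
      simp [hvu.symm, hut]
  have ht2 : s2.aliceTurn = true := by rw [hs2, EGStep_turn, ht1]; rfl
  have hc2u : s2.col u = some du := by
    show Function.update s1.col v' (some cu) u = some du
    rw [Function.update_of_ne hvu.symm]
    exact hdu
  have hc2t : s2.col t = some cstar := by
    show Function.update s1.col v' (some cu) t = some cstar
    rw [Function.update_of_ne (fun h => hvt h.symm)]
    exact hcolt
  have hc2v : s2.col v' = some cu := by
    show Function.update s1.col v' (some cu) v' = some cu
    exact Function.update_self _ _ _
  replace hS2 : EGSurvives G (1 + 1) s2 := hS2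
  rw [surv_alice ht2] at hS2
  obtain ⟨w2, c2, hleg2, hS1⟩ := hS2
  -- u is stuck, so w2 ≠ u
  have hstuck : ∀ c : Fin 3, ¬ EGLegal G s2 u c := by
    intro c hc
    have h1 : c ≠ du := fun h => hc.2.1 (h ▸ hc2u)
    have h2 : c ≠ cstar := fun h => hc.2.2 t htu.symm (h ▸ hc2t)
    have h3 : c ≠ cu := fun h => hc.2.2 v' huv (h ▸ hc2v)
    rcases fin3_cover du cstar cu c hducstar hducu hcstarcu with h | h | h <;>
      [exact h1 h; exact h2 h; exact h3 h]
  have hw2u : w2 ≠ u := fun h => hstuck c2 (h ▸ hleg2)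
  have hw2v : w2 ≠ v' := fun h => hleg2.1 (by rw [hp2, h]; exact Finset.mem_insert_self _ _)
  have hw2t : w2 ≠ t := fun h => hleg2.1 (by rw [hp2, h]; simp)
  set s3 := EGStep s2 w2 c2 with hs3
  have ht3 : s3.aliceTurn = false := by rw [hs3, EGStep_turn, ht2]; rfl
  have hp3 : s3.played = insert w2 (insert v' {t}) := by
    rw [hs3, EGStep_played_of_ne]
    · rw [hp2]
    · rw [hp2]
      refine ne_univ_of_not_mem (a := u) ?_
      simp [hw2u.symm, hvu.symm, hut]
  have hc3u : s3.col u = some du := by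
    show Function.update s2.col w2 (some c2) u = some du
    rw [Function.update_of_ne hw2u.symm]; exact hc2u
  have hc3t : s3.col t = some cstar := by
    show Function.update s2.col w2 (some c2) t = some cstar
    rw [Function.update_of_ne (fun h => hw2t h.symm)]; exact hc2t
  have hc3v : s3.col v' = some cu := by
    show Function.update s2.col w2 (some c2) v' = some cu
    rw [Function.update_of_ne (fun h => hw2v h.symm)]; exact hc2v
  replace hS1 : EGSurvives G (0 + 1) s3 := hS1
  rw [surv_bob ht3] at hS1
  obtain ⟨hcheck3, -⟩ := hS1
  obtain ⟨c3, hc3⟩ := hcheck3 u (by rw [hp3]; simp [hw2u.symm, hvu.symm, hut])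
  have h1 : c3 ≠ du := fun h => hc3.2.1 (h ▸ hc3u)
  have h2 : c3 ≠ cstar := fun h => hc3.2.2 t htu.symm (h ▸ hc3t)
  have h3 : c3 ≠ cu := fun h => hc3.2.2 v' huv (h ▸ hc3v)
  rcases fin3_cover du cstar cu c3 hducstar hducu hcstarcu with h | h | h <;>
    [exact h1 h; exact h2 h; exact h3 h]

end Kill

section StarKill

variable {G : SimpleGraph V}

/-- 4-ply kill at an Alice-turn reset state on a star, given two differently colored leaves. -/
lemma kill_star_alice {z : V}
    (hstar : ∀ v, v ≠ z → G.Adj z v ∧ ∀ w, G.Adj v w → w = z)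
    (hcard : 3 ≤ Fintype.card V)
    (s : EGState V 3) (hturn : s.aliceTurn = true) (hplayed : s.played = ∅)
    (hall : ∀ v, (s.col v).isSome) (hpr : PrOpt G s.col)
    {l1 l2 : V} (hl1 : l1 ≠ z) (hl2 : l2 ≠ z) {c1 c2 : Fin 3}
    (hcl1 : s.col l1 = some c1) (hcl2 : s.col l2 = some c2) (hc12 : c1 ≠ c2) :
    ¬ EGSurvives G 4 s := by
  intro hS0
  replace hS0 : EGSurvives G (3 + 1) s := hS0
  rw [surv_alice hturn] at hS0
  obtain ⟨t, cstar, hleg, hS3⟩ := hS0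
  obtain ⟨dz, hdz⟩ := Option.isSome_iff_exists.1 (hall z)
  -- Alice cannot move at z since z is stuck
  have htz : t ≠ z := by
    rintro rfl
    have h1 : cstar ≠ dz := fun h => hleg.2.1 (h ▸ hdz)
    have h2 : cstar ≠ c1 := fun h => hleg.2.2 l1 (hstar l1 hl1).1 (h ▸ hcl1)
    have h3 : cstar ≠ c2 := fun h => hleg.2.2 l2 (hstar l2 hl2).1 (h ▸ hcl2)
    have hdzc1 : dz ≠ c1 := fun h => hpr t l1 (hstar l1 hl1).1 dz hdz (h ▸ hcl1)
    have hdzc2 : dz ≠ c2 := fun h => hpr t l2 (hstar l2 hl2).1 dz hdz (h ▸ hcl2)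
    rcases fin3_cover dz c1 c2 cstar hdzc1 hdzc2 hc12 with h | h | h <;>
      [exact h1 h; exact h2 h; exact h3 h]
  set s1 := EGStep s t cstar with hs1
  have hp1 : s1.played = {t} := by
    rw [hs1, EGStep_played_of_ne]
    · simp [hplayed]
    · rw [hplayed]
      exact ne_univ_of_not_mem (a := z) (by simpa using (Ne.symm htz))
  have ht1 : s1.aliceTurn = false := by rw [hs1, EGStep_turn, hturn]; rfl
  have hc1' : s1.col = Function.update s.col t (some cstar) := rfl
  have hall1 : ∀ v, (s1.col v).isSome := by rw [hc1']; exact hall_step hall _ _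
  have hpr1 : PrOpt G s1.col := by rw [hc1']; exact prOpt_step hpr hleg.2.2
  have hcolt : s1.col t = some cstar := by rw [hc1']; exact Function.update_self _ _ _
  have hczz : s1.col z = some dz := by
    rw [hc1', Function.update_of_ne (Ne.symm htz)]; exact hdz
  replace hS3 : EGSurvives G (2 + 1) s1 := hS3
  rw [surv_bob ht1] at hS3
  obtain ⟨hcheck1, hmoves1⟩ := hS3
  -- z is unplayed in s1, with legal color cz
  obtain ⟨cz, hcz⟩ := hcheck1 z (by rw [hp1]; simpa using (Ne.symm htz))
  -- all leaves share the color cstar (t is one of them)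
  have hmono : ∀ p, p ≠ z → s1.col p = some cstar := by
    intro p hp
    obtain ⟨dp, hdp⟩ := Option.isSome_iff_exists.1 (hall1 p)
    have := mono_nbhd hpr1 hczz hcz.2.1 hcz.2.2 (hstar p hp).1 (hstar t htz).1 hdp hcolt
    rw [hdp, this]
  -- distinctness
  have hMdz : cstar ≠ dz := fun h => hpr1 z t (hstar t htz).1 dz hczz (h ▸ hcolt)
  have hMcz : cstar ≠ cz := fun h => hcz.2.2 t (hstar t htz).1 (h ▸ hcolt)
  have hdzcz : dz ≠ cz := fun h => hcz.2.1 (h ▸ hczz)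
  -- pick a fresh leaf p
  have hpex : ∃ p : V, p ≠ z ∧ p ≠ t := by
    by_contra hno
    push_neg at hno
    have : (Finset.univ : Finset V) ⊆ {z, t} := by
      intro y _
      rcases eq_or_ne y z with rfl | hy
      · simp
      · simp [hno y hy]
    have := Finset.card_le_card this
    have h2 : ({z, t} : Finset V).card ≤ 2 := Finset.card_insert_le _ _ |>.trans (by simp)
    rw [Finset.card_univ] at this
    omega
  obtain ⟨p, hpz, hpt⟩ := hpex
  have hcolp : s1.col p = some cstar := hmono p hpz
  -- Bob recolors p with cz
  have hlegB : EGLegal G s1 p cz := by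
    refine ⟨by rw [hp1]; simpa using hpt, ?_, ?_⟩
    · rw [hcolp]; exact some_ne hMcz
    · intro w hw
      have hwz : w = z := (hstar p hpz).2 w hw
      rw [hwz, hczz]; exact some_ne hdzcz
  have hS2 := hmoves1 p cz hlegB
  set s2 := EGStep s1 p cz with hs2
  have hp2 : s2.played = insert p {t} := by
    rw [hs2, EGStep_played_of_ne]
    · rw [hp1]
    · rw [hp1]
      refine ne_univ_of_not_mem (a := z) ?_
      simp [Ne.symm hpz, Ne.symm htz]
  have ht2 : s2.aliceTurn = true := by rw [hs2, EGStep_turn, ht1]; rfl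
  have hc2z : s2.col z = some dz := by
    show Function.update s1.col p (some cz) z = some dz
    rw [Function.update_of_ne (Ne.symm hpz)]; exact hczz
  have hc2t : s2.col t = some cstar := by
    show Function.update s1.col p (some cz) t = some cstar
    rw [Function.update_of_ne (Ne.symm hpt)]; exact hcolt
  have hc2p : s2.col p = some cz := by
    show Function.update s1.col p (some cz) p = some cz
    exact Function.update_self _ _ _
  replace hS2 : EGSurvives G (1 + 1) s2 := hS2
  rw [surv_alice ht2] at hS2
  obtain ⟨w2, cw, hleg2, hS1⟩ := hS2
  -- z is stuck in s2
  have hstuck : ∀ c : Fin 3, ¬ EGLegal G s2 z c := by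
    intro c hc
    have h1 : c ≠ dz := fun h => hc.2.1 (h ▸ hc2z)
    have h2 : c ≠ cstar := fun h => hc.2.2 t (hstar t htz).1 (h ▸ hc2t)
    have h3 : c ≠ cz := fun h => hc.2.2 p (hstar p hpz).1 (h ▸ hc2p)
    rcases fin3_cover dz cstar cz c (Ne.symm hMdz) hdzcz hMcz with h | h | h <;>
      [exact h1 h; exact h2 h; exact h3 h]
  have hw2z : w2 ≠ z := fun h => hstuck cw (h ▸ hleg2)
  have hw2p : w2 ≠ p := fun h => hleg2.1 (by rw [hp2, h]; exact Finset.mem_insert_self _ _)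
  have hw2t : w2 ≠ t := fun h => hleg2.1 (by rw [hp2, h]; simp)
  set s3 := EGStep s2 w2 cw with hs3
  have ht3 : s3.aliceTurn = false := by rw [hs3, EGStep_turn, ht2]; rfl
  have hp3 : s3.played = insert w2 (insert p {t}) := by
    rw [hs3, EGStep_played_of_ne]
    · rw [hp2]
    · rw [hp2]
      refine ne_univ_of_not_mem (a := z) ?_
      simp [Ne.symm hw2z, Ne.symm hpz, Ne.symm htz]
  have hc3z : s3.col z = some dz := by
    show Function.update s2.col w2 (some cw) z = some dz
    rw [Function.update_of_ne (Ne.symm hw2z)]; exact hc2z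
  have hc3t : s3.col t = some cstar := by
    show Function.update s2.col w2 (some cw) t = some cstar
    rw [Function.update_of_ne (Ne.symm hw2t)]; exact hc2t
  have hc3p : s3.col p = some cz := by
    show Function.update s2.col w2 (some cw) p = some cz
    rw [Function.update_of_ne (Ne.symm hw2p)]; exact hc2p
  replace hS1 : EGSurvives G (0 + 1) s3 := hS1
  rw [surv_bob ht3] at hS1
  obtain ⟨hcheck3, -⟩ := hS1
  obtain ⟨c3, hc3⟩ := hcheck3 z (by rw [hp3]; simp [Ne.symm hw2z, Ne.symm hpz, Ne.symm htz])
  have h1 : c3 ≠ dz := fun h => hc3.2.1 (h ▸ hc3z)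
  have h2 : c3 ≠ cstar := fun h => hc3.2.2 t (hstar t htz).1 (h ▸ hc3t)
  have h3 : c3 ≠ cz := fun h => hc3.2.2 p (hstar p hpz).1 (h ▸ hc3p)
  rcases fin3_cover dz cstar cz c3 (Ne.symm hMdz) hdzcz hMcz with h | h | h <;>
    [exact h1 h; exact h2 h; exact h3 h]

/-- 3-ply kill at a Bob-turn reset state on a star with at least 3 leaves. -/
lemma kill_star_bob {z : V}
    (hstar : ∀ v, v ≠ z → G.Adj z v ∧ ∀ w, G.Adj v w → w = z)
    (hcard : 4 ≤ Fintype.card V)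
    (s : EGState V 3) (hturn : s.aliceTurn = false) (hplayed : s.played = ∅)
    (hall : ∀ v, (s.col v).isSome) (hpr : PrOpt G s.col) :
    ¬ EGSurvives G 3 s := by
  intro hS0
  replace hS0 : EGSurvives G (2 + 1) s := hS0
  rw [surv_bob hturn] at hS0
  obtain ⟨hcheck0, hmoves0⟩ := hS0
  obtain ⟨dz, hdz⟩ := Option.isSome_iff_exists.1 (hall z)
  obtain ⟨cz, hcz⟩ := hcheck0 z (by rw [hplayed]; exact Finset.notMem_empty _)
  -- pick a leaf p
  have hpex : ∃ p : V, p ≠ z := by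
    have : 1 < Fintype.card V := by omega
    exact Fintype.exists_ne_of_one_lt_card this z
  obtain ⟨p, hpz⟩ := hpex
  obtain ⟨M, hM⟩ := Option.isSome_iff_exists.1 (hall p)
  -- all leaves share the color M
  have hmono : ∀ q, q ≠ z → s.col q = some M := by
    intro q hq
    obtain ⟨dq, hdq⟩ := Option.isSome_iff_exists.1 (hall q)
    have := mono_nbhd hpr hdz hcz.2.1 hcz.2.2 (hstar q hq).1 (hstar p hpz).1 hdq hM
    rw [hdq, this]
  have hMdz : M ≠ dz := fun h => hpr z p (hstar p hpz).1 dz hdz (h ▸ hM)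
  have hMcz : M ≠ cz := fun h => hcz.2.2 p (hstar p hpz).1 (h ▸ hM)
  have hdzcz : dz ≠ cz := fun h => hcz.2.1 (h ▸ hdz)
  -- Bob recolors p with cz
  have hlegB : EGLegal G s p cz := by
    refine ⟨by rw [hplayed]; exact Finset.notMem_empty _, ?_, ?_⟩
    · rw [hM]; exact some_ne hMcz
    · intro w hw
      rw [(hstar p hpz).2 w hw, hdz]; exact some_ne hdzcz
  have hS2 := hmoves0 p cz hlegB
  set s1 := EGStep s p cz with hs1
  have hp1 : s1.played = {p} := by
    rw [hs1, EGStep_played_of_ne]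
    · simp [hplayed]
    · rw [hplayed]
      exact ne_univ_of_not_mem (a := z) (by simpa using Ne.symm hpz)
  have ht1 : s1.aliceTurn = true := by rw [hs1, EGStep_turn, hturn]; rfl
  have hc1z : s1.col z = some dz := by
    show Function.update s.col p (some cz) z = some dz
    rw [Function.update_of_ne (Ne.symm hpz)]; exact hdz
  have hc1p : s1.col p = some cz := by
    show Function.update s.col p (some cz) p = some cz
    exact Function.update_self _ _ _
  have hc1q : ∀ q, q ≠ z → q ≠ p → s1.col q = some M := by
    intro q hqz hqp
    show Function.update s.col p (some cz) q = some M
    rw [Function.update_of_ne hqp]; exact hmono q hqz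
  replace hS2 : EGSurvives G (1 + 1) s1 := hS2
  rw [surv_alice ht1] at hS2
  obtain ⟨w2, cw, hleg2, hS1⟩ := hS2
  -- z is stuck in s1 (find a leaf other than p, still colored M)
  have hqex : ∃ q : V, q ≠ z ∧ q ≠ p := by
    by_contra hno
    push_neg at hno
    have : (Finset.univ : Finset V) ⊆ {z, p} := by
      intro y _
      rcases eq_or_ne y z with rfl | hy
      · simp
      · simp [hno y hy]
    have := Finset.card_le_card this
    have h2 : ({z, p} : Finset V).card ≤ 2 := Finset.card_insert_le _ _ |>.trans (by simp)
    rw [Finset.card_univ] at this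
    omega
  obtain ⟨q, hqz, hqp⟩ := hqex
  have hstuck : ∀ c : Fin 3, ¬ EGLegal G s1 z c := by
    intro c hc
    have h1 : c ≠ dz := fun h => hc.2.1 (h ▸ hc1z)
    have h2 : c ≠ cz := fun h => hc.2.2 p (hstar p hpz).1 (h ▸ hc1p)
    have h3 : c ≠ M := fun h => hc.2.2 q (hstar q hqz).1 (h ▸ hc1q q hqz hqp)
    rcases fin3_cover dz cz M c hdzcz (Ne.symm hMdz) (Ne.symm hMcz) with h | h | h <;>
      [exact h1 h; exact h2 h; exact h3 h]
  have hw2z : w2 ≠ z := fun h => hstuck cw (h ▸ hleg2)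
  have hw2p : w2 ≠ p := fun h => hleg2.1 (by rw [hp1, h]; simp)
  set s2 := EGStep s1 w2 cw with hs2
  have ht2 : s2.aliceTurn = false := by rw [hs2, EGStep_turn, ht1]; rfl
  have hp2 : s2.played = insert w2 {p} := by
    rw [hs2, EGStep_played_of_ne]
    · rw [hp1]
    · rw [hp1]
      refine ne_univ_of_not_mem (a := z) ?_
      simp [Ne.symm hw2z, Ne.symm hpz]
  have hc2z : s2.col z = some dz := by
    show Function.update s1.col w2 (some cw) z = some dz
    rw [Function.update_of_ne (Ne.symm hw2z)]; exact hc1z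
  have hc2p : s2.col p = some cz := by
    show Function.update s1.col w2 (some cw) p = some cz
    rw [Function.update_of_ne (Ne.symm hw2p)]; exact hc1p
  -- a fresh leaf q' not in {z, p, w2}
  have hqex2 : ∃ q' : V, q' ≠ z ∧ q' ≠ p ∧ q' ≠ w2 := by
    by_contra hno
    push_neg at hno
    have : (Finset.univ : Finset V) ⊆ {z, p, w2} := by
      intro y _
      rcases eq_or_ne y z with rfl | hy
      · simp
      rcases eq_or_ne y p with rfl | hy2
      · simp
      · simp [hno y hy hy2]
    have := Finset.card_le_card this
    have h3 : ({z, p, w2} : Finset V).card ≤ 3 :=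
      (Finset.card_insert_le _ _).trans (by
        have := Finset.card_insert_le p ({w2} : Finset V)
        simp only [Finset.card_singleton] at this ⊢
        omega)
    rw [Finset.card_univ] at this
    omega
  obtain ⟨q', hq'z, hq'p, hq'w⟩ := hqex2
  have hc2q : s2.col q' = some M := by
    show Function.update s1.col w2 (some cw) q' = some M
    rw [Function.update_of_ne hq'w]; exact hc1q q' hq'z hq'p
  replace hS1 : EGSurvives G (0 + 1) s2 := hS1
  rw [surv_bob ht2] at hS1
  obtain ⟨hcheck2, -⟩ := hS1
  obtain ⟨c3, hc3⟩ := hcheck2 z (by rw [hp2]; simp [Ne.symm hw2z, Ne.symm hpz])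
  have h1 : c3 ≠ dz := fun h => hc3.2.1 (h ▸ hc2z)
  have h2 : c3 ≠ cz := fun h => hc3.2.2 p (hstar p hpz).1 (h ▸ hc2p)
  have h3 : c3 ≠ M := fun h => hc3.2.2 q' (hstar q' hq'z).1 (h ▸ hc2q)
  rcases fin3_cover dz cz M c3 hdzcz (Ne.symm hMdz) (Ne.symm hMcz) with h | h | h <;>
    [exact h1 h; exact h2 h; exact h3 h]

end StarKill

section Strategy

variable {G : SimpleGraph V}

/-- Round 1 invariant: colored = played, proper, turn parity, round not complete. -/
def R1Inv (G : SimpleGraph V) {k : ℕ} (s : EGState V k) : Prop :=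
  (∀ w, s.col w ≠ none ↔ w ∈ s.played) ∧ PrOpt G s.col ∧
    (s.aliceTurn = true ↔ Even s.played.card) ∧ s.played ≠ Finset.univ

/-- Later rounds invariant: all colored, proper, turn parity, round not complete. -/
def R2Inv (G : SimpleGraph V) (s : EGState V 3) : Prop :=
  (∀ w, (s.col w).isSome) ∧ PrOpt G s.col ∧
    (s.aliceTurn = true ↔ ¬ Even s.played.card) ∧ s.played ≠ Finset.univ

lemma parity_step {a : Bool} {c : ℕ} (h : a = true ↔ Even c) :
    ((!a) = true ↔ Even (c + 1)) := by
  cases a <;> simp_all [Nat.even_add_one]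

lemma parity_step' {a : Bool} {c : ℕ} (h : a = true ↔ ¬ Even c) :
    ((!a) = true ↔ ¬ Even (c + 1)) := by
  cases a <;> simp_all [Nat.even_add_one]

lemma R1Inv_init [Nonempty V] {k : ℕ} : R1Inv G (EGInit V k) := by
  refine ⟨fun w => by simp [EGInit], ?_, by simp [EGInit], ?_⟩
  · intro a b _ c hc
    simp [EGInit] at hc
  · show (∅ : Finset V) ≠ Finset.univ
    exact fun h => (Finset.univ_nonempty (α := V)).ne_empty h.symm

lemma R1Inv_step [Nonempty V] {k : ℕ} {s : EGState V k} {v : V} {c : Fin k}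
    (hI : R1Inv G s) (hleg : EGLegal G s v c) (hne : insert v s.played ≠ Finset.univ) :
    R1Inv G (EGStep s v c) := by
  obtain ⟨hdom, hpr, hpar, hnu⟩ := hI
  have hp : (EGStep s v c).played = insert v s.played := EGStep_played_of_ne _ _ _ hne
  refine ⟨?_, ?_, ?_, step_played_ne_univ _ _ _⟩
  · intro w
    rw [hp, EGStep_col]
    rcases eq_or_ne w v with rfl | hw
    · simp
    · rw [Function.update_of_ne hw]
      simp only [Finset.mem_insert, hdom w]
      constructor
      · exact Or.inr
      · rintro (rfl | h)
        · exact absurd rfl hw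
        · exact h
  · rw [EGStep_col]; exact prOpt_step hpr hleg.2.2
  · rw [hp, EGStep_turn, Finset.card_insert_of_notMem hleg.1]
    exact parity_step hpar

lemma R2Inv_step [Nonempty V] {s : EGState V 3} {v : V} {c : Fin 3}
    (hI : R2Inv G s) (hleg : EGLegal G s v c) (hne : insert v s.played ≠ Finset.univ) :
    R2Inv G (EGStep s v c) := by
  obtain ⟨hall, hpr, hpar, hnu⟩ := hI
  have hp : (EGStep s v c).played = insert v s.played := EGStep_played_of_ne _ _ _ hne
  refine ⟨?_, ?_, ?_, step_played_ne_univ _ _ _⟩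
  · rw [EGStep_col]; exact hall_step hall _ _
  · rw [EGStep_col]; exact prOpt_step hpr hleg.2.2
  · rw [hp, EGStep_turn, Finset.card_insert_of_notMem hleg.1]
    exact parity_step' hpar

lemma reset_card {s : EGState V 3} {v : V} (hv : v ∉ s.played)
    (heq : insert v s.played = Finset.univ) : s.played.card + 1 = Fintype.card V := by
  rw [← Finset.card_insert_of_notMem hv, heq, Finset.card_univ]

lemma step_all_some {k : ℕ} {s : EGState V k} {v : V} {c : Fin k}
    (heq : insert v s.played = Finset.univ)
    (hdom : ∀ w, w ∈ s.played → (s.col w).isSome) :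
    ∀ w, ((EGStep s v c).col w).isSome := by
  intro w
  rw [EGStep_col]
  rcases eq_or_ne w v with rfl | hw
  · rw [Function.update_self]; rfl
  · rw [Function.update_of_ne hw]
    have : w ∈ insert v s.played := heq ▸ Finset.mem_univ w
    rcases Finset.mem_insert.1 this with rfl | h
    · exact absurd rfl hw
    · exact hdom w h

lemma EGStep_played_of_eq {k : ℕ} (s : EGState V k) (v : V) (c : Fin k)
    (h : insert v s.played = Finset.univ) : (EGStep s v c).played = ∅ := if_pos h

/-- Common facts about the state right after a round resets. -/
lemma reset_state_facts {k : ℕ} {s : EGState V k} {v : V} {c : Fin k}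
    (hdom : ∀ w, w ∈ s.played → (s.col w).isSome) (hpr : PrOpt G s.col)
    (hleg : EGLegal G s v c) (heq : insert v s.played = Finset.univ) :
    (EGStep s v c).played = ∅ ∧ (∀ w, ((EGStep s v c).col w).isSome) ∧
      PrOpt G (EGStep s v c).col := by
  refine ⟨EGStep_played_of_eq s v c heq, step_all_some heq hdom, ?_⟩
  rw [EGStep_col]
  exact prOpt_step hpr hleg.2.2

/-- Non-star, |V| even: Bob wins right after round 1. -/
lemma bob_nonstar_even (hcard : 3 ≤ Fintype.card V) (heven : Even (Fintype.card V))
    (hns : ∀ t : V, ∃ u w, G.Adj t u ∧ G.Adj u w ∧ w ≠ t) :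
    ¬ EGSurvives G (Fintype.card V + 4) (EGInit V 3) := by
  have : Nonempty V := Fintype.card_pos_iff.1 (by omega)
  refine run (R1Inv G) 4 (fun s hs => hs.2.2.2) (fun s v c hI hleg hne => R1Inv_step hI hleg hne)
    ?_ (Fintype.card V) (EGInit V 3) R1Inv_init (by simp)
  intro s v c hI hleg heq
  obtain ⟨hdom, hpr, hpar, hnu⟩ := hI
  have hc := reset_card hleg.1 heq
  have hodd : ¬ Even s.played.card := by
    intro h
    rw [Nat.even_iff] at h heven
    omega
  have hmover : s.aliceTurn = false := by
    cases hh : s.aliceTurn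
    · rfl
    · exact absurd (hpar.1 hh) hodd
  have hturn : (EGStep s v c).aliceTurn = true := by
    rw [EGStep_turn, hmover]; rfl
  obtain ⟨hpl, hall, hpr'⟩ :=
    reset_state_facts (G := G) (fun w hw => Option.ne_none_iff_isSome.1 ((hdom w).2 hw))
      hpr hleg heq
  exact kill_nonstar hcard hns _ hturn hpl hall hpr'

/-- Non-star, |V| odd: Bob plays through round 2 and wins after it. -/
lemma bob_nonstar_odd (hcard : 3 ≤ Fintype.card V) (hodd : ¬ Even (Fintype.card V))
    (hns : ∀ t : V, ∃ u w, G.Adj t u ∧ G.Adj u w ∧ w ≠ t) :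
    ¬ EGSurvives G (Fintype.card V + (Fintype.card V + 4)) (EGInit V 3) := by
  have : Nonempty V := Fintype.card_pos_iff.1 (by omega)
  refine run (R1Inv G) (Fintype.card V + 4) (fun s hs => hs.2.2.2)
    (fun s v c hI hleg hne => R1Inv_step hI hleg hne)
    ?_ (Fintype.card V) (EGInit V 3) R1Inv_init (by simp)
  intro s v c hI hleg heq
  obtain ⟨hdom, hpr, hpar, hnu⟩ := hI
  have hc := reset_card hleg.1 heq
  have heven' : Even s.played.card := by
    rw [Nat.even_iff] at hodd ⊢
    omega
  have hmover : s.aliceTurn = true := by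
    cases hh : s.aliceTurn
    · exfalso
      exact Bool.false_ne_true (hh ▸ hpar.2 heven')
    · rfl
  have hturn : (EGStep s v c).aliceTurn = false := by
    rw [EGStep_turn, hmover]; rfl
  obtain ⟨hpl, hall, hpr'⟩ :=
    reset_state_facts (G := G) (fun w hw => Option.ne_none_iff_isSome.1 ((hdom w).2 hw))
      hpr hleg heq
  -- now run through round 2
  refine run (R2Inv G) 4 (fun s' hs' => hs'.2.2.2)
    (fun s' v' c' hI' hleg' hne' => R2Inv_step hI' hleg' hne') ?_ (Fintype.card V) _
    ⟨hall, hpr', by rw [hturn, hpl]; simp, by rw [hpl]; exact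
      fun h => (Finset.univ_nonempty (α := V)).ne_empty h.symm⟩ (by rw [hpl]; simp)
  intro s' v' c' hI' hleg' heq'
  obtain ⟨hall', hpr'', hpar', hnu'⟩ := hI'
  have hc' := reset_card hleg'.1 heq'
  have heven'' : Even s'.played.card := by
    rw [Nat.even_iff] at hodd ⊢
    omega
  have hmover' : s'.aliceTurn = false := by
    cases hh : s'.aliceTurn
    · rfl
    · exact absurd heven'' (hpar'.1 hh)
  have hturn' : (EGStep s' v' c').aliceTurn = true := by
    rw [EGStep_turn, hmover']; rfl
  obtain ⟨hpl', hall'', hpr'''⟩ :=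
    reset_state_facts (G := G) (fun w _ => hall' w) hpr'' hleg' heq'
  exact kill_nonstar hcard hns _ hturn' hpl' hall'' hpr'''

/-- Star, |V| odd: Bob wins right after round 1. -/
lemma bob_star_odd {z : V}
    (hstar : ∀ v, v ≠ z → G.Adj z v ∧ ∀ w, G.Adj v w → w = z)
    (hcard : 4 ≤ Fintype.card V) (hodd : ¬ Even (Fintype.card V)) :
    ¬ EGSurvives G (Fintype.card V + 3) (EGInit V 3) := by
  have : Nonempty V := Fintype.card_pos_iff.1 (by omega)
  refine run (R1Inv G) 3 (fun s hs => hs.2.2.2) (fun s v c hI hleg hne => R1Inv_step hI hleg hne)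
    ?_ (Fintype.card V) (EGInit V 3) R1Inv_init (by simp)
  intro s v c hI hleg heq
  obtain ⟨hdom, hpr, hpar, hnu⟩ := hI
  have hc := reset_card hleg.1 heq
  have heven' : Even s.played.card := by
    rw [Nat.even_iff] at hodd ⊢
    omega
  have hmover : s.aliceTurn = true := by
    cases hh : s.aliceTurn
    · exact absurd (hh ▸ hpar.2 heven') Bool.false_ne_true
    · rfl
  have hturn : (EGStep s v c).aliceTurn = false := by
    rw [EGStep_turn, hmover]; rfl
  obtain ⟨hpl, hall, hpr'⟩ :=
    reset_state_facts (G := G) (fun w hw => Option.ne_none_iff_isSome.1 ((hdom w).2 hw))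
      hpr hleg heq
  exact kill_star_bob hstar hcard _ hturn hpl hall hpr'

end Strategy

section StarEven

variable {G : SimpleGraph V}

/-- Two differently colored leaves exist. -/
def ThetaInv (z : V) (s : EGState V 3) : Prop :=
  ∃ (a b : V) (ca cb : Fin 3), a ≠ z ∧ b ≠ z ∧ s.col a = some ca ∧ s.col b = some cb ∧ ca ≠ cb

lemma theta_step {z : V} {s : EGState V 3} {v : V} {c : Fin 3}
    (hdom : ∀ w, s.col w ≠ none ↔ w ∈ s.played) (hv : v ∉ s.played) (hΘ : ThetaInv z s) :
    ThetaInv z (EGStep s v c) := by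
  obtain ⟨a, b, ca, cb, haz, hbz, hca, hcb, hne⟩ := hΘ
  have hav : a ≠ v := fun h => hv (h ▸ (hdom a).1 (by rw [hca]; simp))
  have hbv : b ≠ v := fun h => hv (h ▸ (hdom b).1 (by rw [hcb]; simp))
  refine ⟨a, b, ca, cb, haz, hbz, ?_, ?_, hne⟩
  · rw [EGStep_col, Function.update_of_ne hav]; exact hca
  · rw [EGStep_col, Function.update_of_ne hbv]; exact hcb

lemma exists_not_mem_of_card_lt {s : Finset V} (h : s.card < Fintype.card V) :
    ∃ x, x ∉ s := by
  by_contra hno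
  push_neg at hno
  rw [Finset.eq_univ_iff_forall.2 hno, Finset.card_univ] at h
  omega

lemma ne_univ_card {s : Finset V} (h : s.card < Fintype.card V) : s ≠ Finset.univ := by
  intro he
  rw [he, Finset.card_univ] at h
  omega

/-- Star, |V| even: Bob forces two differently colored leaves in round 1 and wins
after round 1. -/
lemma bob_star_even {z : V}
    (hstar : ∀ v, v ≠ z → G.Adj z v ∧ ∀ w, G.Adj v w → w = z)
    (hcard : 4 ≤ Fintype.card V) (heven : Even (Fintype.card V)) :
    ¬ EGSurvives G (Fintype.card V + 4) (EGInit V 3) := by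
  have hnezero : Nonempty V := Fintype.card_pos_iff.1 (by omega)
  set n := Fintype.card V with hn
  -- the run lemma with the Theta invariant
  have hrun : ∀ (j : ℕ) (s : EGState V 3), (R1Inv G s ∧ ThetaInv z s) →
      n ≤ s.played.card + j → ¬ EGSurvives G (j + 4) s := by
    refine run (fun s => R1Inv G s ∧ ThetaInv z s) 4 (fun s hs => hs.1.2.2.2)
      (fun s v c hI hleg hne =>
        ⟨R1Inv_step hI.1 hleg hne, theta_step hI.1.1 hleg.1 hI.2⟩) ?_
    intro s v c hI hleg heq
    obtain ⟨⟨hdom, hpr, hpar, hnu⟩, hΘ⟩ := hI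
    have hc := reset_card hleg.1 heq
    have hodd : ¬ Even s.played.card := by
      intro h
      rw [Nat.even_iff] at h heven
      omega
    have hmover : s.aliceTurn = false := by
      cases hh : s.aliceTurn
      · rfl
      · exact absurd (hpar.1 hh) hodd
    have hturn : (EGStep s v c).aliceTurn = true := by rw [EGStep_turn, hmover]; rfl
    obtain ⟨hpl, hall, hpr'⟩ :=
      reset_state_facts (G := G) (fun w hw => Option.ne_none_iff_isSome.1 ((hdom w).2 hw))
        hpr hleg heq
    obtain ⟨a, b, ca, cb, haz, hbz, hca, hcb, hab⟩ := theta_step hdom hleg.1 hΘ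
    exact kill_star_alice hstar (by omega) _ hturn hpl hall hpr' haz hbz hca hcb hab
  -- the opening
  intro hS0
  rw [(by omega : n + 4 = (n + 3) + 1)] at hS0
  rw [surv_alice rfl] at hS0
  obtain ⟨v1, c1, hleg1, hS1⟩ := hS0
  set s1 := EGStep (EGInit V 3) v1 c1 with hs1
  have hne1 : insert v1 (EGInit V 3).played ≠ Finset.univ := by
    refine ne_univ_card ?_
    show (insert v1 (∅ : Finset V)).card < n
    rw [show insert v1 (∅ : Finset V) = {v1} from rfl, Finset.card_singleton]
    omega
  have hI1 : R1Inv G s1 := R1Inv_step R1Inv_init hleg1 hne1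
  have hp1 : s1.played = {v1} := by
    rw [hs1, EGStep_played_of_ne _ _ _ hne1]
    rfl
  have ht1 : s1.aliceTurn = false := rfl
  have hcol1 : s1.col = Function.update (fun _ => none) v1 (some c1) := rfl
  rw [(by omega : n + 3 = (n + 2) + 1)] at hS1
  rw [surv_bob ht1] at hS1
  obtain ⟨hcheck1, hmoves1⟩ := hS1
  by_cases hv1z : v1 = z
  · -- Case B : Alice colored the center
    subst v1
    obtain ⟨l1, hl1z⟩ := Fintype.exists_ne_of_one_lt_card (by omega) z
    obtain ⟨cB, hBc1, -⟩ := fin3_exists_ne c1 c1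
    have hcol1z : s1.col z = some c1 := by rw [hcol1]; exact Function.update_self _ _ _
    have hlegB : EGLegal G s1 l1 cB := by
      refine ⟨by rw [hp1]; simpa using hl1z, ?_, ?_⟩
      · rw [hcol1, Function.update_of_ne hl1z]
        simp
      · intro w hw
        rw [(hstar l1 hl1z).2 w hw, hcol1z]
        exact some_ne (Ne.symm hBc1)
    have hS2 := hmoves1 l1 cB hlegB
    set s2 := EGStep s1 l1 cB with hs2
    have hne2 : insert l1 s1.played ≠ Finset.univ := by
      refine ne_univ_card ?_
      rw [hp1, Finset.card_insert_of_notMem (by simpa using hl1z), Finset.card_singleton]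
      omega
    have hI2 : R1Inv G s2 := R1Inv_step hI1 hlegB hne2
    have hp2 : s2.played = insert l1 {z} := by
      rw [hs2, EGStep_played_of_ne _ _ _ hne2, hp1]
    have hp2card : s2.played.card = 2 := by
      rw [hp2, Finset.card_insert_of_notMem (by simpa using hl1z), Finset.card_singleton]
    have ht2 : s2.aliceTurn = true := rfl
    have hcol2l1 : s2.col l1 = some cB := by
      rw [hs2, EGStep_col]; exact Function.update_self _ _ _
    have hcol2z : s2.col z = some c1 := by
      rw [hs2, EGStep_col, Function.update_of_ne (Ne.symm hl1z)]; exact hcol1z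
    rw [(by omega : n + 2 = (n + 1) + 1)] at hS2
    rw [surv_alice ht2] at hS2
    obtain ⟨v3, c3, hleg3, hS3⟩ := hS2
    have hv3l1 : v3 ≠ l1 := fun h => hleg3.1 (by rw [hp2, h]; simp)
    have hv3z : v3 ≠ z := fun h => hleg3.1 (by rw [hp2, h]; simp)
    set s3 := EGStep s2 v3 c3 with hs3
    have hne3 : insert v3 s2.played ≠ Finset.univ := by
      refine ne_univ_card ?_
      rw [hp2, Finset.card_insert_of_notMem (by simp [hv3l1, hv3z]),
        Finset.card_insert_of_notMem (by simpa using hl1z), Finset.card_singleton]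
      omega
    have hI3 : R1Inv G s3 := R1Inv_step hI2 hleg3 hne3
    have hp3 : s3.played = insert v3 (insert l1 {z}) := by
      rw [hs3, EGStep_played_of_ne _ _ _ hne3, hp2]
    have hp3card : s3.played.card = 3 := by
      rw [hp3, Finset.card_insert_of_notMem (by simp [hv3l1, hv3z]),
        Finset.card_insert_of_notMem (by simpa using hl1z), Finset.card_singleton]
    have ht3 : s3.aliceTurn = false := rfl
    have hcol3l1 : s3.col l1 = some cB := by
      rw [hs3, EGStep_col, Function.update_of_ne (Ne.symm hv3l1)]; exact hcol2l1
    have hcol3v3 : s3.col v3 = some c3 := by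
      rw [hs3, EGStep_col]; exact Function.update_self _ _ _
    have hcol3z : s3.col z = some c1 := by
      rw [hs3, EGStep_col, Function.update_of_ne (Ne.symm hv3z)]; exact hcol2z
    by_cases h3B : c3 = cB
    · -- Alice matched Bob's leaf color; Bob colors a fresh leaf with a third color
      rw [(by omega : n + 1 = n + 1)] at hS3
      rw [surv_bob ht3] at hS3
      obtain ⟨hcheck3, hmoves3⟩ := hS3
      obtain ⟨l4, hl4⟩ := exists_not_mem_of_card_lt (s := {z, l1, v3}) (by
        have h1 : ({z, l1, v3} : Finset V).card ≤ 3 := by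
          refine (Finset.card_insert_le _ _).trans ?_
          have h2 := Finset.card_insert_le l1 ({v3} : Finset V)
          simp only [Finset.card_singleton] at h2 ⊢
          omega
        omega)
      simp only [Finset.mem_insert, Finset.mem_singleton, not_or] at hl4
      obtain ⟨hl4z, hl4l1, hl4v3⟩ := hl4
      obtain ⟨c4, h4c1, h4B⟩ := fin3_exists_ne c1 cB
      have hcol3l4 : s3.col l4 = none := by
        rw [hs3, EGStep_col, Function.update_of_ne hl4v3, hs2, EGStep_col,
          Function.update_of_ne hl4l1, hcol1, Function.update_of_ne hl4z]
      have hleg4 : EGLegal G s3 l4 c4 := by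
        refine ⟨by rw [hp3]; simp [hl4z, hl4l1, hl4v3], by rw [hcol3l4]; simp, ?_⟩
        intro w hw
        rw [(hstar l4 hl4z).2 w hw, hcol3z]
        exact some_ne (Ne.symm h4c1)
      have hS4 := hmoves3 l4 c4 hleg4
      set s4 := EGStep s3 l4 c4 with hs4
      have hcol4l1 : s4.col l1 = some cB := by
        rw [hs4, EGStep_col, Function.update_of_ne (Ne.symm hl4l1)]; exact hcol3l1
      have hcol4l4 : s4.col l4 = some c4 := by
        rw [hs4, EGStep_col]; exact Function.update_self _ _ _
      by_cases hres : insert l4 s3.played = Finset.univ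
      · -- the round resets right here; apply the kill lemma
        have hturn4 : s4.aliceTurn = true := rfl
        obtain ⟨hpl4, hall4, hpr4⟩ :=
          reset_state_facts (G := G)
            (fun w hw => Option.ne_none_iff_isSome.1 ((hI3.1 w).2 hw)) hI3.2.1 hleg4 hres
        exact kill_star_alice hstar (by omega) s4 hturn4 hpl4 hall4 hpr4 hl1z hl4z
          hcol4l1 hcol4l4 (fun h => h4B h.symm) (surv_le (by omega) hS4)
      · have hI4 : R1Inv G s4 := R1Inv_step hI3 hleg4 hres
        have hΘ4 : ThetaInv z s4 :=
          ⟨l1, l4, cB, c4, hl1z, hl4z, hcol4l1, hcol4l4, fun h => h4B h.symm⟩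
        have hp4card : s4.played.card = 4 := by
          have hp4 : s4.played = insert l4 s3.played := by
            rw [hs4, EGStep_played_of_ne _ _ _ hres]
          rw [hp4, Finset.card_insert_of_notMem (by rw [hp3]; simp [hl4z, hl4l1, hl4v3]),
            hp3card]
        refine hrun (n - 4) s4 ⟨hI4, hΘ4⟩ (by omega) ?_
        rw [(by omega : n - 4 + 4 = n)]
        exact hS4
    · -- Alice's leaf differs from Bob's; Theta holds already
      have hΘ3 : ThetaInv z s3 :=
        ⟨l1, v3, cB, c3, hl1z, hv3z, hcol3l1, hcol3v3, fun h => h3B h.symm⟩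
      refine hrun (n - 3) s3 ⟨hI3, hΘ3⟩ (by omega) ?_
      rw [(by omega : n - 3 + 4 = n + 1)]
      exact hS3
  · -- Case A : Alice colored a leaf; Bob colors another leaf differently
    obtain ⟨l2, hl2⟩ := exists_not_mem_of_card_lt (s := {z, v1}) (by
      have h1 : ({z, v1} : Finset V).card ≤ 2 := (Finset.card_insert_le _ _).trans (by simp)
      omega)
    simp only [Finset.mem_insert, Finset.mem_singleton, not_or] at hl2
    obtain ⟨hl2z, hl2v1⟩ := hl2
    obtain ⟨c2, h2c1, -⟩ := fin3_exists_ne c1 c1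
    have hcol1v1 : s1.col v1 = some c1 := by rw [hcol1]; exact Function.update_self _ _ _
    have hlegB : EGLegal G s1 l2 c2 := by
      refine ⟨by rw [hp1]; simpa using hl2v1, ?_, ?_⟩
      · rw [hcol1, Function.update_of_ne hl2v1]; simp
      · intro w hw
        rw [(hstar l2 hl2z).2 w hw, hcol1, Function.update_of_ne (fun h => hv1z h.symm)]
        simp
    have hS2 := hmoves1 l2 c2 hlegB
    set s2 := EGStep s1 l2 c2 with hs2
    have hne2 : insert l2 s1.played ≠ Finset.univ := by
      refine ne_univ_card ?_
      rw [hp1, Finset.card_insert_of_notMem (by simpa using hl2v1), Finset.card_singleton]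
      omega
    have hI2 : R1Inv G s2 := R1Inv_step hI1 hlegB hne2
    have hp2 : s2.played = insert l2 {v1} := by
      rw [hs2, EGStep_played_of_ne _ _ _ hne2, hp1]
    have hp2card : s2.played.card = 2 := by
      rw [hp2, Finset.card_insert_of_notMem (by simpa using hl2v1), Finset.card_singleton]
    have hcol2v1 : s2.col v1 = some c1 := by
      rw [hs2, EGStep_col, Function.update_of_ne (Ne.symm hl2v1)]; exact hcol1v1
    have hcol2l2 : s2.col l2 = some c2 := by
      rw [hs2, EGStep_col]; exact Function.update_self _ _ _
    have hΘ2 : ThetaInv z s2 :=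
      ⟨v1, l2, c1, c2, hv1z, hl2z, hcol2v1, hcol2l2, fun h => h2c1 h.symm⟩
    refine hrun (n - 2) s2 ⟨hI2, hΘ2⟩ (by omega) ?_
    rw [(by omega : n - 2 + 4 = n + 2)]
    exact hS2

end StarEven

/-- Every finite connected graph other than K_1, K_2, P_3 has χ_g^∞(G) > 3:
Bob wins with at most 3 colors. -/
theorem eternal_game_chromatic_gt_three
    {V : Type} [Fintype V] [DecidableEq V] (G : SimpleGraph V)
    (hconn : G.Connected)
    (h1 : ¬ Nonempty (G ≃g (⊤ : SimpleGraph (Fin 1))))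
    (h2 : ¬ Nonempty (G ≃g (⊤ : SimpleGraph (Fin 2))))
    (h3 : ¬ Nonempty (G ≃g pathGraph 3)) :
    ∀ k, k ≤ 3 → ¬ AliceWinsEG G k := by
  intro k hk hA
  have hcard3 : 3 ≤ Fintype.card V := card_ge_three hconn h1 h2
  have hne : Nonempty V := hconn.nonempty
  interval_cases k
  · -- zero colors: Alice has no first move
    have hS : EGSurvives G (0 + 1) (EGInit V 0) := hA 1
    rw [surv_alice rfl] at hS
    obtain ⟨v, c, -, -⟩ := hS
    exact c.elim0
  · -- one color: any neighbor of Alice's first vertex is stuck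
    have hS : EGSurvives G (1 + 1) (EGInit V 1) := hA 2
    rw [surv_alice rfl] at hS
    obtain ⟨v1, c1, hleg1, hS1⟩ := hS
    obtain ⟨u, hu⟩ := exists_adj hconn (by omega) v1
    set s1 := EGStep (EGInit V 1) v1 c1 with hs1
    have hne1 : insert v1 (EGInit V 1).played ≠ Finset.univ := by
      refine ne_univ_card ?_
      show (insert v1 (∅ : Finset V)).card < _
      rw [show insert v1 (∅ : Finset V) = {v1} from rfl, Finset.card_singleton]
      omega
    have ht1 : s1.aliceTurn = false := rfl
    replace hS1 : EGSurvives G (0 + 1) s1 := hS1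
    rw [surv_bob ht1] at hS1
    obtain ⟨hcheck, -⟩ := hS1
    have hp1 : s1.played = {v1} := by rw [hs1, EGStep_played_of_ne _ _ _ hne1]; rfl
    obtain ⟨c, hc⟩ := hcheck u (by rw [hp1]; simpa using hu.ne')
    have hcc : c = c1 := Subsingleton.elim c c1
    refine hc.2.2 v1 hu.symm ?_
    rw [hcc, hs1, EGStep_col]
    exact Function.update_self _ _ _
  · -- two colors: after round 1 every vertex is stuck
    refine run (G := G) (R1Inv G) 1 (fun s hs => hs.2.2.2)
      (fun s v c hI hleg hne' => R1Inv_step hI hleg hne') ?_ (Fintype.card V)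
      (EGInit V 2) R1Inv_init (by simp) (hA _)
    intro s v c hI hleg heq hS
    obtain ⟨hdom, hpr, -, -⟩ := hI
    obtain ⟨hpl, hall, hpr'⟩ :=
      reset_state_facts (G := G) (fun w hw => Option.ne_none_iff_isSome.1 ((hdom w).2 hw))
        hpr hleg heq
    set s' := EGStep s v c with hs'
    replace hS : EGSurvives G (0 + 1) s' := hS
    cases hht : s'.aliceTurn
    · rw [surv_bob hht] at hS
      obtain ⟨hcheck, -⟩ := hS
      have v0 := Classical.arbitrary V
      obtain ⟨c0, hc0⟩ := hcheck v0 (by rw [hpl]; exact Finset.notMem_empty _)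
      obtain ⟨u0, hu0⟩ := exists_adj hconn (by omega) v0
      obtain ⟨dv, hdv⟩ := Option.isSome_iff_exists.1 (hall v0)
      obtain ⟨du, hdu⟩ := Option.isSome_iff_exists.1 (hall u0)
      have h1' : dv ≠ du := fun h => hpr' v0 u0 hu0 dv hdv (h ▸ hdu)
      have h2' : c0 ≠ dv := fun h => hc0.2.1 (h ▸ hdv)
      have h3' : c0 ≠ du := fun h => hc0.2.2 u0 hu0 (h ▸ hdu)
      exact fin2_three_distinct dv du c0 h1' h2' h3'
    · rw [surv_alice hht] at hS
      obtain ⟨v0, c0, hleg0, -⟩ := hS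
      obtain ⟨u0, hu0⟩ := exists_adj hconn (by omega) v0
      obtain ⟨dv, hdv⟩ := Option.isSome_iff_exists.1 (hall v0)
      obtain ⟨du, hdu⟩ := Option.isSome_iff_exists.1 (hall u0)
      have h1' : dv ≠ du := fun h => hpr' v0 u0 hu0 dv hdv (h ▸ hdu)
      have h2' : c0 ≠ dv := fun h => hleg0.2.1 (h ▸ hdv)
      have h3' : c0 ≠ du := fun h => hleg0.2.2 u0 hu0 (h ▸ hdu)
      exact fin2_three_distinct dv du c0 h1' h2' h3'
  · -- three colors: the main strategies
    rcases star_or_ns hconn with hns | ⟨z, hstar⟩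
    · rcases Nat.even_or_odd (Fintype.card V) with he | ho
      · exact bob_nonstar_even hcard3 he hns (hA _)
      · exact bob_nonstar_odd hcard3 (Nat.not_even_iff_odd.2 ho) hns (hA _)
    · have hc4 : 4 ≤ Fintype.card V := by
        have := star_card_ne_three hconn h3 hstar
        omega
      rcases Nat.even_or_odd (Fintype.card V) with he | ho
      · exact bob_star_even hstar hc4 he (hA _)
      · exact bob_star_odd hstar hc4 (Nat.not_even_iff_odd.2 ho) (hA _)
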